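/- arXiv:1801.05357 — 2 statements merged into one kernel-verified Lean document; each statement's English description precedes it below -/
import Mathlib

section
/- Let a and b be two distinct complex numbers and let F : ℂ → ℂ be the entire function F(z) = e^(−z) + a + b. Then F and its derivative F' share the set {a, b} with every weight, i.e., for every z ∈ ℂ the order of vanishing of (F − a)(F − b) at z equals the order of vanishing of (F' − a)(F' − b) at z; nevertheless F is not identically equal to F'. (Consequently, no two-element subset of ℂ can be a set whose sharing by F and F' forces F ≡ F'.) -/
/- Order of vanishing of an entire (analytic) function at a point, as an element of ℕ ∪ {∞}.
(For functions analytic at the point, this is the usual order of vanishing; the junk value 0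
is never used in the statements below, where the functions involved are entire.) -/
open Classical in
noncomputable def eOrder (h : ℂ → ℂ) (z : ℂ) : ℕ∞ :=
  if hh : AnalyticAt ℂ h z then analyticOrderAt h z else 0

/-- F(z) = e^(−z) + a + b and F' share the two-element set {a, b}
with every weight (they share it CM), but F ≢ F'. -/
theorem stmt_9 (a b : ℂ) (hab : a ≠ b)
    (F : ℂ → ℂ) (hF : F = fun z => Complex.exp (-z) + a + b) :
    (∀ z : ℂ, eOrder (fun w => (F w - a) * (F w - b)) z =
      eOrder (fun w => (deriv F w - a) * (deriv F w - b)) z) ∧ F ≠ deriv F := by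
  have hderiv : deriv F = fun w => -Complex.exp (-w) := by
    funext w
    rw [hF]
    have h1 : HasDerivAt (fun z : ℂ => Complex.exp (-z) + a + b) (-Complex.exp (-w)) w := by
      have h0 := (Complex.hasDerivAt_exp (-w)).comp w (hasDerivAt_neg w)
      simpa [mul_comm] using (h0.add_const a).add_const b
    exact h1.deriv
  constructor
  · intro z
    have : (fun w => (F w - a) * (F w - b)) =
        (fun w => (deriv F w - a) * (deriv F w - b)) := by
      funext w
      rw [hderiv, hF]
      ring
    rw [this]
  · intro h
    have h0 := congrFun h 0
    have h1 := congrFun h (Real.pi * Complex.I)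
    rw [hderiv, hF] at h0 h1
    simp only at h0 h1
    rw [neg_zero, Complex.exp_zero] at h0
    have e1 : Complex.exp (-(Real.pi * Complex.I)) = -1 := by
      rw [Complex.exp_neg, Complex.exp_pi_mul_I]
      norm_num
    rw [e1] at h1
    -- h0 : 1 + a + b = -1, h1 : -1 + a + b = -(-1)
    have e2 : (-1 : ℂ) + a + b = 1 := by simpa using h1
    have e3 : (2 : ℂ) = -2 := by linear_combination h0 - e2
    norm_num at e3
end

section
/- Let k ≥ 1 and m ≥ k+1 be integers and let f be a nonconstant meromorphic function on ℂ such that (f^m)^(k) agrees with f^m away from a discrete subset of ℂ. Then f has neither zeros nor poles (so f extends to a nowhere-vanishing entire function), and there exist a nonzero complex constant c and a complex number ζ with ζ^k = 1 such that f(z) = c·exp(ζz/m) away from a discrete subset of ℂ. -/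
open Complex Filter Set Metric Topology Bornology

/-- Compatibility: order of a meromorphic function. -/
noncomputable def MeromorphicAt.order {f : ℂ → ℂ} {x : ℂ} (_ : MeromorphicAt f x) : WithTop ℤ :=
  meromorphicOrderAt f x

lemma MeromorphicAt.order_eq_top_iff {f : ℂ → ℂ} {x : ℂ} (hf : MeromorphicAt f x) :
    hf.order = ⊤ ↔ ∀ᶠ z in 𝓝[≠] x, f z = 0 :=
  meromorphicOrderAt_eq_top_iff

lemma MeromorphicAt.order_eq_int_iff {f : ℂ → ℂ} {x : ℂ} (hf : MeromorphicAt f x) (n : ℤ) :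
    hf.order = n ↔
      ∃ g : ℂ → ℂ, AnalyticAt ℂ g x ∧ g x ≠ 0 ∧ ∀ᶠ z in 𝓝[≠] x, f z = (z - x) ^ n • g z :=
  meromorphicOrderAt_eq_int_iff hf

/-- Order is invariant under punctured-neighborhood equality. -/
lemma mero_order_congr {f g : ℂ → ℂ} {x : ℂ} (hf : MeromorphicAt f x) (hg : MeromorphicAt g x)
    (h : f =ᶠ[𝓝[≠] x] g) : hf.order = hg.order := by
  cases h' : hf.order with
  | top =>
    rw [hf.order_eq_top_iff] at h'
    exact ((hg.order_eq_top_iff).mpr (h.symm.trans h')).symm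
  | coe n =>
    obtain ⟨u, hu, hux, hrep⟩ := (hf.order_eq_int_iff n).mp h'
    exact ((hg.order_eq_int_iff n).mpr
      ⟨u, hu, hux, (h.symm.and hrep).mono fun z hz => hz.1.trans hz.2⟩).symm

/-- Order of a power. -/
lemma mero_order_pow {f : ℂ → ℂ} {x : ℂ} (hf : MeromorphicAt f x) {n : ℤ} (hn : hf.order = n)
    (m : ℕ) (hfm : MeromorphicAt (fun z => f z ^ m) x) : hfm.order = (m * n : ℤ) := by
  obtain ⟨g, hg, hgx, hrep⟩ := (hf.order_eq_int_iff n).mp hn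
  rw [hfm.order_eq_int_iff]
  refine ⟨fun z => g z ^ m, hg.pow m, pow_ne_zero m hgx, ?_⟩
  filter_upwards [hrep, self_mem_nhdsWithin] with z hz hz'
  have hzx : z - x ≠ 0 := sub_ne_zero.mpr hz'
  simp only [smul_eq_mul] at hz ⊢
  rw [hz, mul_pow, ← zpow_natCast ((z - x) ^ n), ← zpow_mul, mul_comm n (m : ℤ)]

/-- Derivative drops nonzero order by one. -/
lemma mero_order_deriv {f : ℂ → ℂ} {x : ℂ} (hf : MeromorphicAt f x) {n : ℤ}
    (hn : hf.order = n) (h0 : n ≠ 0) :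
    ∃ hd : MeromorphicAt (deriv f) x, hd.order = (n - 1 : ℤ) := by
  obtain ⟨g, hg, hgx, hrep⟩ := (hf.order_eq_int_iff n).mp hn
  -- get an open set V ∋ x on which the representation holds and g is analytic
  have hga := hg.eventually_analyticAt
  rw [eventually_nhdsWithin_iff] at hrep
  obtain ⟨V, hV, hVo, hxV⟩ := _root_.eventually_nhds_iff.mp (hrep.and hga)
  set g₁ : ℂ → ℂ := fun z => (n : ℂ) * g z + (z - x) * deriv g z with hg₁def
  have hkey : ∀ z ∈ V, z ≠ x → deriv f z = (z - x) ^ (n - 1 : ℤ) • g₁ z := by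
    intro z hzV hzx
    have hsub : z - x ≠ 0 := sub_ne_zero.mpr hzx
    -- f agrees with the representation on a neighborhood of z
    have hev : f =ᶠ[𝓝 z] fun w => (w - x) ^ n • g w := by
      have : V ∩ {w | w ≠ x} ∈ 𝓝 z :=
        (hVo.inter isOpen_ne).mem_nhds ⟨hzV, hzx⟩
      filter_upwards [this] with w hw
      exact (hV w hw.1).1 hw.2
    rw [hev.deriv_eq]
    -- compute derivative of the representation
    have h1 : HasDerivAt (fun w : ℂ => (w - x) ^ n) ((n : ℂ) * (z - x) ^ (n - 1) * 1) z := by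
      exact (hasDerivAt_zpow n (z - x) (Or.inl hsub)).comp z ((hasDerivAt_id z).sub_const x)
    have h2 : HasDerivAt g (deriv g z) z :=
      ((hV z hzV).2.differentiableAt).hasDerivAt
    have h3 := h1.fun_mul h2
    have h4 : deriv (fun w => (w - x) ^ n • g w) z
        = (n : ℂ) * (z - x) ^ (n - 1) * 1 * g z + (z - x) ^ n * deriv g z := by
      simpa only [smul_eq_mul] using h3.deriv
    rw [h4]
    have hzn : (z - x) ^ n = (z - x) ^ (n - 1 : ℤ) * (z - x) := by
      rw [← zpow_add_one₀ hsub, sub_add_cancel]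
    simp only [smul_eq_mul, hg₁def, hzn]
    ring
  have hevd : deriv f =ᶠ[𝓝[≠] x] fun z => (z - x) ^ (n - 1 : ℤ) • g₁ z := by
    rw [EventuallyEq, eventually_nhdsWithin_iff]
    exact _root_.eventually_nhds_iff.mpr ⟨V, fun z hz hzx => hkey z hz hzx, hVo, hxV⟩
  have hg₁ : AnalyticAt ℂ g₁ x := by
    have hdg : AnalyticAt ℂ (deriv g) x := by
      obtain ⟨W, hW, hWo, hxW⟩ := _root_.eventually_nhds_iff.mp hga
      exact (AnalyticOnNhd.deriv (fun z hz => hW z hz) ) x hxW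
    exact (analyticAt_const.mul hg).add ((analyticAt_id.sub analyticAt_const).mul hdg)
  have hg₁x : g₁ x ≠ 0 := by
    simp only [hg₁def, sub_self, zero_mul, add_zero]
    exact mul_ne_zero (Int.cast_ne_zero.mpr h0) hgx
  have hmero : MeromorphicAt (deriv f) x := by
    have : MeromorphicAt (fun z => (z - x) ^ (n - 1 : ℤ) • g₁ z) x := by
      exact (((MeromorphicAt.id x).sub (MeromorphicAt.const x x)).zpow (n - 1)).smul
        hg₁.meromorphicAt
    exact this.congr hevd.symm
  exact ⟨hmero, (hmero.order_eq_int_iff (n - 1)).mpr ⟨g₁, hg₁, hg₁x, hevd⟩⟩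

/-- Iterated derivative drops order by k, as long as intermediate orders are nonzero. -/
lemma mero_order_iteratedDeriv {h : ℂ → ℂ} {x : ℂ} (hm : MeromorphicAt h x) {N : ℤ}
    (hN : hm.order = N) :
    ∀ K : ℕ, (∀ j : ℕ, j < K → N - j ≠ 0) →
      ∃ hd : MeromorphicAt (iteratedDeriv K h) x, hd.order = (N - K : ℤ) := by
  intro K
  induction K with
  | zero =>
    intro _
    refine ⟨by simpa [iteratedDeriv_zero] using hm, ?_⟩
    simpa [iteratedDeriv_zero] using hN
  | succ K ih =>
    intro hjs
    obtain ⟨hd, hdo⟩ := ih (fun j hj => hjs j (Nat.lt_succ_of_lt hj))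
    have hne : (N - K : ℤ) ≠ 0 := hjs K (Nat.lt_succ_self K)
    obtain ⟨hd', hdo'⟩ := mero_order_deriv hd hdo hne
    rw [iteratedDeriv_succ]
    refine ⟨hd', ?_⟩
    rw [hdo']
    congr 1
    push_cast
    ring

/-- A meromorphic function is analytic on a punctured neighborhood of each point. -/
lemma mero_eventually_analytic {f : ℂ → ℂ} {x : ℂ} (hf : MeromorphicAt f x) :
    ∀ᶠ z in 𝓝[≠] x, AnalyticAt ℂ f z := by
  obtain ⟨n, hn⟩ := hf
  have := hn.eventually_analyticAt
  rw [eventually_nhdsWithin_iff]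
  filter_upwards [this] with y hy hyx
  have hyx' : y - x ≠ 0 := sub_ne_zero.mpr hyx
  have h1 : AnalyticAt ℂ (fun z => ((z - x) ^ n)⁻¹ • ((z - x) ^ n • f z)) y := by
    exact (((analyticAt_id.sub analyticAt_const).pow n).inv (pow_ne_zero n hyx')).smul hy
  apply h1.congr
  have : {w : ℂ | w ≠ x} ∈ 𝓝 y := isOpen_ne.mem_nhds hyx
  filter_upwards [this] with w hw
  have hw' : (w - x) ^ n ≠ 0 := pow_ne_zero n (sub_ne_zero.mpr hw)
  simp [smul_eq_mul, hw']

/-- If two functions are continuous at y and agree on a punctured neighborhood,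
they agree at y. -/
lemma eq_at_of_punctured_eq {u v : ℂ → ℂ} {y : ℂ} (hu : ContinuousAt u y)
    (hv : ContinuousAt v y) (h : u =ᶠ[𝓝[≠] y] v) : u y = v y := by
  have h1 : Filter.Tendsto u (𝓝[≠] y) (𝓝 (u y)) := hu.tendsto.mono_left nhdsWithin_le_nhds
  have h2 : Filter.Tendsto v (𝓝[≠] y) (𝓝 (v y)) := hv.tendsto.mono_left nhdsWithin_le_nhds
  exact tendsto_nhds_unique_of_eventuallyEq h1 h2 h

/-- A discrete subset of ℂ has dense complement. -/
lemma dense_compl_of_discrete {s : Set ℂ} (hs : DiscreteTopology s) : Dense sᶜ := by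
  rw [← interior_eq_empty_iff_dense_compl]
  by_contra h
  obtain ⟨p, hp⟩ := Set.nonempty_iff_ne_empty.mpr h
  have hps : p ∈ s := interior_subset hp
  have hbot : 𝓝[≠] p ⊓ 𝓟 s = ⊥ := discreteTopology_subtype_iff.mp hs p hps
  have hs_mem : s ∈ 𝓝[≠] p :=
    nhdsWithin_le_nhds (mem_interior_iff_mem_nhds.mp hp)
  rw [inf_of_le_left (le_principal_iff.mpr hs_mem)] at hbot
  exact (NeBot.ne inferInstance) hbot

lemma analyticOnNhd_iteratedDeriv {F : ℂ → ℂ} {O : Set ℂ} (hF : AnalyticOnNhd ℂ F O) (j : ℕ) :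
    AnalyticOnNhd ℂ (iteratedDeriv j F) O := by
  induction j with
  | zero => simpa [iteratedDeriv_zero] using hF
  | succ j ih => rw [iteratedDeriv_succ]; exact ih.deriv

lemma eq_on_analytic {f : ℂ → ℂ} {k m : ℕ} {s : Set ℂ} (hs : DiscreteTopology s)
    (hsEq : ∀ z ∉ s, iteratedDeriv k (fun u => f u ^ m) z = f z ^ m)
    {x : ℂ} (hx : AnalyticAt ℂ f x) :
    iteratedDeriv k (fun u => f u ^ m) x = f x ^ m := by
  obtain ⟨O, hO, hOo, hxO⟩ := _root_.eventually_nhds_iff.mp hx.eventually_analyticAt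
  have hFm : AnalyticOnNhd ℂ (fun u => f u ^ m) O := fun z hz => (hO z hz).pow m
  have hITDk : AnalyticAt ℂ (iteratedDeriv k (fun u => f u ^ m)) x :=
    analyticOnNhd_iteratedDeriv hFm k x hxO
  have hd : Dense sᶜ := dense_compl_of_discrete hs
  have hcl : x ∈ closure (O ∩ sᶜ) := by
    rw [_root_.mem_closure_iff]
    intro V hVo hxV
    obtain ⟨z, hz⟩ := hd.inter_open_nonempty (V ∩ O) (hVo.inter hOo) ⟨x, hxV, hxO⟩
    exact ⟨z, hz.1.1, hz.1.2, hz.2⟩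
  have hne : (𝓝[O ∩ sᶜ] x).NeBot := mem_closure_iff_nhdsWithin_neBot.mp hcl
  have h1 : Tendsto (iteratedDeriv k (fun u => f u ^ m)) (𝓝[O ∩ sᶜ] x)
      (𝓝 (iteratedDeriv k (fun u => f u ^ m) x)) :=
    (hITDk.continuousAt).tendsto.mono_left nhdsWithin_le_nhds
  have h2 : Tendsto (fun z => f z ^ m) (𝓝[O ∩ sᶜ] x) (𝓝 (f x ^ m)) :=
    ((hx.continuousAt).pow m).tendsto.mono_left nhdsWithin_le_nhds
  refine tendsto_nhds_unique_of_eventuallyEq h1 h2 ?_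
  filter_upwards [self_mem_nhdsWithin] with z hz
  exact hsEq z hz.2

lemma order_ne_top {f : ℂ → ℂ} (hf : MeromorphicOn f Set.univ)
    (hnc : ¬ ∃ c : ℂ, ∃ s : Set ℂ, DiscreteTopology s ∧ ∀ z ∉ s, f z = c) (x : ℂ) :
    (hf x (mem_univ x)).order ≠ ⊤ := by
  intro htop
  rw [MeromorphicAt.order_eq_top_iff (hf x (mem_univ x))] at htop
  set T : Set ℂ := {y | ∀ᶠ z in 𝓝[≠] y, f z = 0} with hT
  have hTopen : IsOpen T := by
    rw [isOpen_iff_mem_nhds]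
    intro y hy
    rw [hT, mem_setOf_eq, eventually_nhdsWithin_iff] at hy
    obtain ⟨V, hV, hVo, hyV⟩ := _root_.eventually_nhds_iff.mp hy
    filter_upwards [hVo.mem_nhds hyV] with w hw
    show ∀ᶠ z in 𝓝[≠] w, f z = 0
    have hmem : V ∩ {y}ᶜ ∈ 𝓝[≠] w := by
      by_cases hwy : w = y
      · subst hwy
        exact inter_mem_inf (hVo.mem_nhds hw) (mem_principal_self _)
      · exact nhdsWithin_le_nhds ((hVo.inter isOpen_compl_singleton).mem_nhds ⟨hw, hwy⟩)
    filter_upwards [hmem] with z hz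
    exact hV z hz.1 hz.2
  have hTclosed : IsClosed T := by
    rw [← isOpen_compl_iff, isOpen_iff_mem_nhds]
    intro y hy
    have hy' : (hf y (mem_univ y)).order ≠ ⊤ := by
      intro h
      exact hy ((hf y (mem_univ y)).order_eq_top_iff.mp h)
    obtain ⟨n, hn⟩ := WithTop.ne_top_iff_exists.mp hy'
    obtain ⟨g, hg, hgy, hrep⟩ := ((hf y (mem_univ y)).order_eq_int_iff n).mp hn.symm
    have hgne : ∀ᶠ z in 𝓝 y, g z ≠ 0 := hg.continuousAt.eventually_ne hgy
    have hfne : ∀ᶠ z in 𝓝[≠] y, f z ≠ 0 := by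
      filter_upwards [hrep, hgne.filter_mono nhdsWithin_le_nhds, self_mem_nhdsWithin]
        with z h1 h2 h3
      rw [h1]
      exact smul_ne_zero (zpow_ne_zero n (sub_ne_zero.mpr h3)) h2
    rw [eventually_nhdsWithin_iff] at hfne
    obtain ⟨V, hV, hVo, hyV⟩ := _root_.eventually_nhds_iff.mp hfne
    filter_upwards [hVo.mem_nhds hyV] with w hw
    intro hwT
    have hmem : V ∩ {y}ᶜ ∈ 𝓝[≠] w := by
      by_cases hwy : w = y
      · subst hwy
        exact inter_mem_inf (hVo.mem_nhds hw) (mem_principal_self _)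
      · exact nhdsWithin_le_nhds ((hVo.inter isOpen_compl_singleton).mem_nhds ⟨hw, hwy⟩)
    have : ∀ᶠ z in 𝓝[≠] w, f z ≠ 0 ∧ f z = 0 := by
      filter_upwards [hmem, hwT] with z hz hz0
      exact ⟨hV z hz.1 hz.2, hz0⟩
    obtain ⟨z, hz⟩ := this.exists
    exact hz.1 hz.2
  have hTuniv : T = Set.univ := by
    rcases isClopen_iff.mp ⟨hTclosed, hTopen⟩ with h | h
    · exact absurd (h ▸ htop : x ∈ (∅ : Set ℂ)) (notMem_empty x)
    · exact h
  apply hnc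
  refine ⟨0, {z | f z ≠ 0}, ?_, fun z hz => not_not.mp hz⟩
  rw [discreteTopology_subtype_iff]
  intro p hp
  rw [inf_principal_eq_bot]
  have : p ∈ T := hTuniv ▸ mem_univ p
  filter_upwards [this] with z hz
  simpa using hz

lemma order_zero_everywhere {k m : ℕ} (hk : 1 ≤ k) (hm : k + 1 ≤ m) {f : ℂ → ℂ}
    (hf : MeromorphicOn f Set.univ)
    (hnc : ¬ ∃ c : ℂ, ∃ s : Set ℂ, DiscreteTopology s ∧ ∀ z ∉ s, f z = c)
    {s : Set ℂ} (hs : DiscreteTopology s)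
    (hsEq : ∀ z ∉ s, iteratedDeriv k (fun u => f u ^ m) z = f z ^ m) :
    ∀ x : ℂ, (hf x (mem_univ x)).order = 0 := by
  intro x
  obtain ⟨n, hn⟩ := WithTop.ne_top_iff_exists.mp (order_ne_top hf hnc x)
  have hn' : (hf x (mem_univ x)).order = (n : WithTop ℤ) := hn.symm
  by_contra hne0
  have hn0 : n ≠ 0 := by
    intro h
    exact hne0 (by rw [hn', h]; rfl)
  have hPm : MeromorphicAt (fun u => f u ^ m) x := (hf x (mem_univ x)).pow m
  have hPmo : hPm.order = ((m : ℤ) * n : ℤ) := mero_order_pow (hf x (mem_univ x)) hn' m hPm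
  have hj : ∀ j : ℕ, j < k → (m : ℤ) * n - j ≠ 0 := by
    intro j hjk
    rcases lt_or_gt_of_ne hn0 with hneg | hpos
    · have h1 : (m : ℤ) * n ≤ -m := by nlinarith [Int.le_sub_one_of_lt hneg]
      have h2 : (0 : ℤ) < m := by exact_mod_cast Nat.lt_of_lt_of_le hk (Nat.le_of_succ_le hm)
      have h3 : (0 : ℤ) ≤ j := Int.ofNat_nonneg j
      omega
    · have h1 : (1 : ℤ) ≤ n := hpos
      have h2 : (m : ℤ) ≤ (m : ℤ) * n := by nlinarith [Int.ofNat_nonneg m]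
      have h3 : (j : ℤ) < k := by exact_mod_cast hjk
      have h4 : (k : ℤ) + 1 ≤ m := by exact_mod_cast hm
      omega
  obtain ⟨hd, hdo⟩ := mero_order_iteratedDeriv hPm hPmo k hj
  have hgeq : iteratedDeriv k (fun u => f u ^ m) =ᶠ[𝓝[≠] x] (fun u => f u ^ m) := by
    filter_upwards [mero_eventually_analytic (hf x (mem_univ x))] with z hz
    exact eq_on_analytic hs hsEq hz
  have horder := mero_order_congr hd hPm hgeq
  rw [hdo, hPmo] at horder
  have : (m : ℤ) * n - k = (m : ℤ) * n := by exact_mod_cast horder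
  have hk0 : (k : ℤ) = 0 := by omega
  exact absurd (by exact_mod_cast hk0) (Nat.one_le_iff_ne_zero.mp hk)

lemma iteratedDeriv_congr_nhds {u v : ℂ → ℂ} {x : ℂ} (h : u =ᶠ[𝓝 x] v) (j : ℕ) :
    iteratedDeriv j u =ᶠ[𝓝 x] iteratedDeriv j v := by
  induction j with
  | zero => simpa [iteratedDeriv_zero] using h
  | succ j ih => rw [iteratedDeriv_succ, iteratedDeriv_succ]; exact ih.deriv

lemma closed_discrete_of_punctured_avoid {D : Set ℂ}
    (h : ∀ x : ℂ, ∀ᶠ z in 𝓝[≠] x, z ∉ D) :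
    IsClosed D ∧ DiscreteTopology D ∧ Dense Dᶜ := by
  have hdisc : DiscreteTopology D := by
    rw [discreteTopology_subtype_iff]
    intro p _
    rw [inf_principal_eq_bot]
    exact h p
  refine ⟨?_, hdisc, dense_compl_of_discrete hdisc⟩
  rw [← isOpen_compl_iff, isOpen_iff_mem_nhds]
  intro x hx
  have : Dᶜ ∈ 𝓝[≠] x := h x
  have h2 : Dᶜ ∈ (pure x : Filter ℂ) := by simpa using hx
  rw [← nhdsNE_sup_pure x]
  exact mem_sup.mpr ⟨‹Dᶜ ∈ 𝓝[≠] x›, h2⟩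

lemma exists_entire_extension {f : ℂ → ℂ} (hf : MeromorphicOn f Set.univ)
    (h0 : ∀ x : ℂ, (hf x (mem_univ x)).order = 0) :
    ∃ F : ℂ → ℂ, (∀ x, AnalyticAt ℂ F x) ∧ (∀ x, F x ≠ 0) ∧ (∀ x, F =ᶠ[𝓝[≠] x] f) := by
  have hrep : ∀ x : ℂ, ∃ g : ℂ → ℂ, AnalyticAt ℂ g x ∧ g x ≠ 0 ∧ ∀ᶠ z in 𝓝[≠] x, f z = g z := by
    intro x
    obtain ⟨g, hg, hgx, he⟩ := ((hf x (mem_univ x)).order_eq_int_iff 0).mp (h0 x)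
    refine ⟨g, hg, hgx, ?_⟩
    filter_upwards [he] with z hz
    simpa using hz
  choose g hg hgx hgev using hrep
  set F : ℂ → ℂ := fun z => g z z with hF
  have hkey : ∀ x : ℂ, ∃ V : Set ℂ, IsOpen V ∧ x ∈ V ∧ ∀ y ∈ V, F y = g x y ∧ (y ≠ x → f y = g x y) := by
    intro x
    have h1 := (hgev x).and ((hg x).eventually_analyticAt.filter_mono nhdsWithin_le_nhds)
    rw [eventually_nhdsWithin_iff] at h1
    obtain ⟨V, hV, hVo, hxV⟩ := _root_.eventually_nhds_iff.mp h1
    refine ⟨V, hVo, hxV, fun y hyV => ?_⟩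
    by_cases hyx : y = x
    · subst hyx; exact ⟨rfl, fun h => absurd rfl h⟩
    · have hfy : f y = g x y := ((hV y hyV) hyx).1
      have hgxy : AnalyticAt ℂ (g x) y := ((hV y hyV) hyx).2
      have hFy : F y = g x y := by
        show g y y = g x y
        apply eq_at_of_punctured_eq (hg y).continuousAt hgxy.continuousAt
        have hmem : V ∩ {x}ᶜ ∈ 𝓝[≠] y :=
          nhdsWithin_le_nhds ((hVo.inter isOpen_compl_singleton).mem_nhds ⟨hyV, hyx⟩)
        filter_upwards [hgev y, hmem] with z h1 h2
        rw [← h1]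
        exact ((hV z h2.1) h2.2).1
      exact ⟨hFy, fun _ => hfy⟩
  refine ⟨F, ?_, ?_, ?_⟩
  · intro x
    obtain ⟨V, hVo, hxV, hV⟩ := hkey x
    apply (hg x).congr
    filter_upwards [hVo.mem_nhds hxV] with y hy
    exact (hV y hy).1.symm
  · intro x
    exact hgx x
  · intro x
    obtain ⟨V, hVo, hxV, hV⟩ := hkey x
    rw [EventuallyEq, eventually_nhdsWithin_iff]
    filter_upwards [hVo.mem_nhds hxV] with y hy hyx
    rw [(hV y hy).1, ((hV y hy).2 hyx)]

lemma global_ode {f F : ℂ → ℂ} {k m : ℕ} {s : Set ℂ} (hs : DiscreteTopology s)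
    (hsEq : ∀ z ∉ s, iteratedDeriv k (fun u => f u ^ m) z = f z ^ m)
    (hFa : ∀ x, AnalyticAt ℂ F x) (hFf : ∀ x, F =ᶠ[𝓝[≠] x] f) :
    iteratedDeriv k (fun z => F z ^ m) = fun z => F z ^ m := by
  set D : Set ℂ := {z | f z ≠ F z} with hD
  have havoid : ∀ x : ℂ, ∀ᶠ z in 𝓝[≠] x, z ∉ D := by
    intro x
    filter_upwards [hFf x] with z hz
    simp only [hD, mem_setOf_eq, not_not]
    exact hz.symm
  obtain ⟨hDc, hDdisc, hDdense⟩ := closed_discrete_of_punctured_avoid havoid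
  have hGanal : AnalyticOnNhd ℂ (fun z => F z ^ m) Set.univ := fun z _ => (hFa z).pow m
  have hGcont : Continuous (fun z => F z ^ m) := by
    rw [continuous_iff_continuousAt]; exact fun z => (hGanal z (mem_univ z)).continuousAt
  have hIGcont : Continuous (iteratedDeriv k (fun z => F z ^ m)) := by
    rw [continuous_iff_continuousAt]
    exact fun z => (analyticOnNhd_iteratedDeriv hGanal k z (mem_univ z)).continuousAt
  apply Continuous.ext_on hDdense hIGcont hGcont
  intro z hz
  have hnhds : f =ᶠ[𝓝 z] F := by
    filter_upwards [hDc.isOpen_compl.mem_nhds hz] with w hw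
    exact not_not.mp hw
  have hfz : AnalyticAt ℂ f z := (hFa z).congr hnhds.symm
  have h1 : iteratedDeriv k (fun z => F z ^ m) z = iteratedDeriv k (fun u => f u ^ m) z := by
    have := iteratedDeriv_congr_nhds (x := z) (u := fun u => F u ^ m) (v := fun u => f u ^ m)
      (by filter_upwards [hnhds] with w hw; rw [hw]) k
    exact this.self_of_nhds
  rw [h1, eq_on_analytic hs hsEq hfz]
  have : f z = F z := not_not.mp hz
  rw [this]

lemma iteratedDeriv_add_eq {G : ℂ → ℂ} (k : ℕ) (hode : iteratedDeriv k G = G) :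
    ∀ n : ℕ, iteratedDeriv (n + k) G = iteratedDeriv n G := by
  have aux : ∀ n : ℕ, iteratedDeriv (n + k) G = iteratedDeriv n (iteratedDeriv k G) := by
    intro n
    induction n with
    | zero => simp [iteratedDeriv_zero]
    | succ n ih =>
      have : n + 1 + k = (n + k) + 1 := by omega
      rw [this, iteratedDeriv_succ, ih, ← iteratedDeriv_succ]
  intro n
  rw [aux n, hode]

lemma growth_of_ode {G : ℂ → ℂ} {k : ℕ} (hk : 1 ≤ k) (hG : Differentiable ℂ G)
    (hode : iteratedDeriv k G = G) :
    ∃ M : ℝ, 1 ≤ M ∧ ∀ z, ‖G z‖ ≤ M * Real.exp ‖z‖ := by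
  set M : ℝ := 1 + ∑ j ∈ Finset.range k, ‖iteratedDeriv j G 0‖ with hM
  have hM1 : 1 ≤ M := by
    have : 0 ≤ ∑ j ∈ Finset.range k, ‖iteratedDeriv j G 0‖ :=
      Finset.sum_nonneg fun j _ => norm_nonneg _
    linarith
  have hbound : ∀ n : ℕ, ‖iteratedDeriv n G 0‖ ≤ M := by
    intro n
    induction n using Nat.strong_induction_on with
    | _ n ih =>
      by_cases hnk : n < k
      · have h1 : ‖iteratedDeriv n G 0‖ ≤ ∑ j ∈ Finset.range k, ‖iteratedDeriv j G 0‖ :=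
          Finset.single_le_sum (f := fun j => ‖iteratedDeriv j G 0‖) (fun j _ => norm_nonneg _) (Finset.mem_range.mpr hnk)
        linarith
      · push_neg at hnk
        have h1 : iteratedDeriv n G = iteratedDeriv (n - k) G := by
          have := iteratedDeriv_add_eq k hode (n - k)
          rwa [Nat.sub_add_cancel hnk] at this
        rw [h1]
        exact ih (n - k) (by omega)
  refine ⟨M, hM1, fun z => ?_⟩
  have hsum := Complex.hasSum_taylorSeries_of_entire hG 0 z
  rw [← hsum.tsum_eq]
  have hterm : ∀ n : ℕ, ‖(n.factorial : ℂ)⁻¹ • (z - 0) ^ n • iteratedDeriv n G 0‖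
      ≤ M * (‖z‖ ^ n / n.factorial) := by
    intro n
    rw [norm_smul, norm_smul, norm_inv, norm_pow]
    have h1 : ‖(n.factorial : ℂ)‖ = (n.factorial : ℝ) := by
      rw [Complex.norm_natCast]
    rw [h1]
    have h2 : ‖z - 0‖ = ‖z‖ := by simp
    rw [h2]
    rw [div_eq_mul_inv]
    have := hbound n
    have hfac : (0:ℝ) < (n.factorial : ℝ) := by positivity
    calc (n.factorial : ℝ)⁻¹ * (‖z‖ ^ n * ‖iteratedDeriv n G 0‖)
        ≤ (n.factorial : ℝ)⁻¹ * (‖z‖ ^ n * M) := by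
          apply mul_le_mul_of_nonneg_left _ (by positivity)
          exact mul_le_mul_of_nonneg_left this (by positivity)
      _ = M * (‖z‖ ^ n * (n.factorial : ℝ)⁻¹) := by ring
  have hsummable : Summable (fun n : ℕ => M * (‖z‖ ^ n / n.factorial)) :=
    (Real.summable_pow_div_factorial ‖z‖).mul_left M
  have hnorm_summable : Summable (fun n : ℕ => ‖(n.factorial : ℂ)⁻¹ • (z - 0) ^ n • iteratedDeriv n G 0‖) :=
    Summable.of_nonneg_of_le (fun n => norm_nonneg _) hterm hsummable
  calc ‖∑' n : ℕ, (n.factorial : ℂ)⁻¹ • (z - 0) ^ n • iteratedDeriv n G 0‖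
      ≤ ∑' n : ℕ, ‖(n.factorial : ℂ)⁻¹ • (z - 0) ^ n • iteratedDeriv n G 0‖ :=
        norm_tsum_le_tsum_norm hnorm_summable
    _ ≤ ∑' n : ℕ, M * (‖z‖ ^ n / n.factorial) := hnorm_summable.tsum_le_tsum hterm hsummable
    _ = M * ∑' n : ℕ, (‖z‖ ^ n / n.factorial) := tsum_mul_left
    _ ≤ M * Real.exp ‖z‖ := by
        apply mul_le_mul_of_nonneg_left _ (by linarith)
        apply (Real.summable_pow_div_factorial ‖z‖).tsum_le_of_sum_range_le
        intro n
        exact Real.sum_le_exp_of_nonneg (norm_nonneg z) n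

/-- Every entire function has an entire primitive. -/
lemma exists_primitive {φ : ℂ → ℂ} (hφ : Differentiable ℂ φ) :
    ∃ Φ : ℂ → ℂ, Φ 0 = 0 ∧ ∀ z, HasDerivAt Φ (φ z) z := by
  set b : ℕ → ℂ := fun n => (n.factorial : ℂ)⁻¹ * iteratedDeriv n φ 0 with hb
  have htay : ∀ z : ℂ, HasSum (fun n : ℕ => b n * z ^ n) (φ z) := by
    intro z
    have := Complex.hasSum_taylorSeries_of_entire hφ 0 z
    simp only [sub_zero, smul_eq_mul] at this
    refine this.congr_fun fun n => ?_
    ring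
  set Φ : ℂ → ℂ := fun z => ∑' n : ℕ, b n / (n + 1) * z ^ (n + 1) with hΦ
  have hΦder : ∀ z₀ : ℂ, HasDerivAt Φ (φ z₀) z₀ := by
    intro z₀
    set R : ℝ := ‖z₀‖ + 1 with hR
    have hRpos : 0 < R := by positivity
    -- bound on coefficients from convergence at 2R
    have h2R := (htay (2 * R : ℝ)).summable
    have hten : Tendsto (fun n : ℕ => ‖b n * ((2 * R : ℝ) : ℂ) ^ n‖) atTop (𝓝 0) := by
      have h := h2R.tendsto_atTop_zero.norm
      simpa using h
    obtain ⟨C, hC⟩ := hten.bddAbove_range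
    have hCb : ∀ n : ℕ, ‖b n‖ * (2 * R) ^ n ≤ C := by
      intro n
      have := hC (mem_range_self (f := fun n : ℕ => ‖b n * ((2 * R : ℝ) : ℂ) ^ n‖) n)
      rw [norm_mul, norm_pow, Complex.norm_real,
        Real.norm_of_nonneg (by linarith : (0:ℝ) ≤ 2 * R)] at this
      exact this
    set u : ℕ → ℝ := fun n => C * (1 / 2) ^ n with hu
    have hub : ∀ n : ℕ, ‖b n‖ * R ^ n ≤ u n := by
      intro n
      have h1 : ‖b n‖ * (2 * R) ^ n ≤ C := hCb n
      have h2 : (2 * R) ^ n = 2 ^ n * R ^ n := by rw [mul_pow]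
      rw [hu]
      have h3 : ‖b n‖ * R ^ n * 2 ^ n ≤ C := by
        calc ‖b n‖ * R ^ n * 2 ^ n = ‖b n‖ * (2 * R) ^ n := by rw [h2]; ring
          _ ≤ C := h1
      have h4 : (0:ℝ) < 2 ^ n := by positivity
      calc ‖b n‖ * R ^ n = (‖b n‖ * R ^ n * 2 ^ n) / 2 ^ n := by field_simp
        _ ≤ C / 2 ^ n := by gcongr
        _ = C * (1 / 2) ^ n := by rw [div_pow, one_pow]; ring
  -- dummy; will continue below
    have husum : Summable u := (summable_geometric_of_lt_one (by norm_num) (by norm_num)).mul_left C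
    have hg : ∀ (n : ℕ) (z : ℂ), z ∈ ball (0:ℂ) R →
        HasDerivAt (fun w => b n / (n + 1) * w ^ (n + 1)) (b n * z ^ n) z := by
      intro n z _
      have h1 : HasDerivAt (fun w : ℂ => w ^ (n + 1)) ((n + 1 : ℕ) * z ^ n) z := by
        simpa using hasDerivAt_pow (n + 1) z
      have h2 := h1.const_mul (b n / (n + 1))
      refine h2.congr_deriv ?_
      have hne : ((n : ℂ) + 1) ≠ 0 := Nat.cast_add_one_ne_zero n
      push_cast
      field_simp
    have hg' : ∀ (n : ℕ) (z : ℂ), z ∈ ball (0:ℂ) R → ‖b n * z ^ n‖ ≤ u n := by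
      intro n z hz
      rw [mem_ball, dist_zero_right] at hz
      rw [norm_mul, norm_pow]
      calc ‖b n‖ * ‖z‖ ^ n ≤ ‖b n‖ * R ^ n := by
            apply mul_le_mul_of_nonneg_left _ (norm_nonneg _)
            exact pow_le_pow_left₀ (norm_nonneg z) hz.le n
        _ ≤ u n := hub n
    have hg0 : Summable (fun n : ℕ => b n / (n + 1) * (0:ℂ) ^ (n + 1)) := by
      apply summable_of_ne_finset_zero (s := ∅)
      intro n _
      simp
    have hz₀ : z₀ ∈ ball (0:ℂ) R := by
      rw [mem_ball, dist_zero_right, hR]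
      linarith
    have hmain := hasDerivAt_tsum_of_isPreconnected husum isOpen_ball
      (convex_ball (0:ℂ) R).isPreconnected hg hg' (mem_ball_self hRpos) hg0 hz₀
    have htse : (∑' n : ℕ, b n * z₀ ^ n) = φ z₀ := (htay z₀).tsum_eq
    rw [htse] at hmain
    exact hmain
  refine ⟨Φ, ?_, hΦder⟩
  rw [hΦ]
  convert tsum_zero with n
  simp

/-- Borel–Carathéodory. -/
lemma borel_caratheodory {ψ : ℂ → ℂ} (hψ : Differentiable ℂ ψ) (hψ0 : ψ 0 = 0) {A R : ℝ}
    (hA : 0 < A) (hR : 0 < R) (hRe : ∀ z : ℂ, ‖z‖ ≤ 2 * R → (ψ z).re < A) :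
    ∀ z : ℂ, ‖z‖ ≤ R → ‖ψ z‖ ≤ 2 * A := by
  set C : ℂ := ((2 * A : ℝ) : ℂ) with hC
  have hden : ∀ z : ℂ, ‖z‖ ≤ 2 * R → C - ψ z ≠ 0 := by
    intro z hz h0
    have h1 : (C - ψ z).re = 2 * A - (ψ z).re := by simp [hC]
    rw [h0] at h1
    simp at h1
    have := hRe z hz
    linarith [h1]
  have hlt : ∀ z : ℂ, ‖z‖ ≤ 2 * R → ‖ψ z‖ < ‖C - ψ z‖ := by
    intro z hz
    apply lt_of_pow_lt_pow_left₀ 2 (norm_nonneg _)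
    have h1 : ‖ψ z‖ ^ 2 = (ψ z).re ^ 2 + (ψ z).im ^ 2 := by
      rw [Complex.sq_norm, Complex.normSq_apply]; ring
    have h2 : ‖C - ψ z‖ ^ 2 = (2 * A - (ψ z).re) ^ 2 + (ψ z).im ^ 2 := by
      rw [Complex.sq_norm, Complex.normSq_apply]
      simp [hC]
      ring
    have h3 := hRe z hz
    rw [h1, h2]
    nlinarith
  set g : ℂ → ℂ := fun z => ψ z / (C - ψ z) with hg
  have hg0 : g 0 = 0 := by simp [hg, hψ0]
  have hgd : DifferentiableOn ℂ g (ball (0:ℂ) (2 * R)) := by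
    apply DifferentiableOn.div hψ.differentiableOn
      ((differentiable_const C).sub hψ).differentiableOn
    intro z hz
    rw [mem_ball, dist_zero_right] at hz
    exact hden z hz.le
  have hmaps : MapsTo g (ball (0:ℂ) (2 * R)) (ball (g 0) 1) := by
    intro z hz
    rw [mem_ball, dist_zero_right] at hz
    rw [hg0, mem_ball, dist_zero_right]
    show ‖ψ z / (C - ψ z)‖ < 1
    rw [norm_div, div_lt_one (lt_of_le_of_lt (norm_nonneg _) (hlt z hz.le))]
    exact hlt z hz.le
  intro z hz
  have hz2R : z ∈ ball (0:ℂ) (2 * R) := by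
    rw [mem_ball, dist_zero_right]; linarith
  have hds := Complex.norm_dslope_le_div_of_mapsTo_ball hgd (hmaps.mono_right ball_subset_closedBall) hz2R
  by_cases hz0 : z = 0
  · rw [hz0, hψ0]; simp; linarith
  · have hgz : ‖g z‖ ≤ 1 / 2 := by
      have h1 : dslope g 0 z = g z / z := by
        rw [dslope_of_ne g hz0, slope_def_field]
        rw [hg0]
        simp [div_eq_mul_inv]
      rw [h1, norm_div] at hds
      have hzpos : 0 < ‖z‖ := norm_pos_iff.mpr hz0
      rw [div_le_div_iff₀ hzpos (by linarith : (0:ℝ) < 2 * R)] at hds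
      calc ‖g z‖ = ‖g z‖ * (2 * R) / (2 * R) := by field_simp
        _ ≤ ‖z‖ * 1 / (2 * R) := by
            apply div_le_div_of_nonneg_right _ (by linarith)
            calc ‖g z‖ * (2 * R) ≤ 1 * ‖z‖ := hds
              _ = ‖z‖ * 1 := by ring
        _ ≤ R * 1 / (2 * R) := by
            apply div_le_div_of_nonneg_right _ (by linarith)
            apply mul_le_mul_of_nonneg_right hz zero_le_one
        _ = 1 / 2 := by field_simp
    have hrec : ψ z = g z * (C - ψ z) := by
      rw [hg]
      field_simp [hden z (by linarith)]
    have h2A : ‖C‖ = 2 * A := by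
      rw [hC, Complex.norm_real, Real.norm_of_nonneg (by linarith)]
    have : ‖ψ z‖ ≤ 1 / 2 * (2 * A + ‖ψ z‖) := by
      calc ‖ψ z‖ = ‖g z * (C - ψ z)‖ := by rw [← hrec]
        _ = ‖g z‖ * ‖C - ψ z‖ := norm_mul _ _
        _ ≤ 1 / 2 * ‖C - ψ z‖ := by
            apply mul_le_mul_of_nonneg_right hgz (norm_nonneg _)
        _ ≤ 1 / 2 * (‖C‖ + ‖ψ z‖) := by
            apply mul_le_mul_of_nonneg_left (norm_sub_le _ _) (by norm_num)
        _ = 1 / 2 * (2 * A + ‖ψ z‖) := by rw [h2A]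
    linarith

/-- An entire function with real part growing at most linearly is affine. -/
lemma affine_of_re_linear_growth {ψ : ℂ → ℂ} (hψ : Differentiable ℂ ψ) {L : ℝ}
    (hRe : ∀ z : ℂ, (ψ z).re ≤ L + ‖z‖) :
    ∃ a b : ℂ, ∀ z, ψ z = a * z + b := by
  -- Step 1: linear growth of ‖ψ‖
  set C₁ : ℝ := 3 * ‖ψ 0‖ + 2 * |L| + 2 with hC₁
  have hC₁0 : 0 ≤ C₁ := by positivity
  have hgrow : ∀ R : ℝ, 0 < R → ∀ z : ℂ, ‖z‖ ≤ R → ‖ψ z‖ ≤ C₁ + 4 * R := by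
    intro R hR z hz
    set χ : ℂ → ℂ := fun w => ψ w - ψ 0 with hχ
    set A : ℝ := |L| + ‖ψ 0‖ + 2 * R + 1 with hA
    have hApos : 0 < A := by positivity
    have hReχ : ∀ w : ℂ, ‖w‖ ≤ 2 * R → (χ w).re < A := by
      intro w hw
      have h1 : (χ w).re = (ψ w).re - (ψ 0).re := by simp [hχ]
      have h2 := hRe w
      have h3 : -(ψ 0).re ≤ ‖ψ 0‖ := by
        have h := Complex.abs_re_le_norm (ψ 0)
        linarith [neg_le_abs (ψ 0).re]
      have h4 : L ≤ |L| := le_abs_self L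
      rw [h1, hA]
      linarith [h2]
    have hbc := borel_caratheodory (hψ.sub_const (ψ 0)) (by simp [hχ]) hApos hR hReχ z hz
    have h4 : ‖ψ z‖ ≤ ‖χ z‖ + ‖ψ 0‖ := by
      have : ψ z = χ z + ψ 0 := by simp [hχ]
      rw [this]
      exact norm_add_le _ _
    have h5 : ‖χ z‖ ≤ 2 * A := hbc
    rw [hA] at h5
    rw [hC₁]
    linarith
  -- Step 2: deriv ψ is bounded
  have hder : ∀ z : ℂ, ‖deriv ψ z‖ ≤ 8 := by
    intro z
    set R : ℝ := ‖z‖ + C₁ + 1 with hR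
    have hRpos : 0 < R := by positivity
    have hsphere : ∀ w : ℂ, w ∈ sphere z R → ‖ψ w‖ ≤ C₁ + 4 * (‖z‖ + R) := by
      intro w hw
      rw [mem_sphere] at hw
      apply hgrow (‖z‖ + R) (by positivity)
      calc ‖w‖ = ‖z + (w - z)‖ := by ring_nf
        _ ≤ ‖z‖ + ‖w - z‖ := norm_add_le _ _
        _ = ‖z‖ + R := by rw [← hw, dist_eq_norm, norm_sub_rev]
    have := Complex.norm_deriv_le_of_forall_mem_sphere_norm_le hRpos
      hψ.diffContOnCl hsphere
    calc ‖deriv ψ z‖ ≤ (C₁ + 4 * (‖z‖ + R)) / R := this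
      _ ≤ 8 := by
          rw [div_le_iff₀ hRpos]
          rw [hR]
          linarith [norm_nonneg z]
  -- Step 3: Liouville for deriv ψ
  have hψan : AnalyticOnNhd ℂ ψ Set.univ := hψ.differentiableOn.analyticOnNhd isOpen_univ
  have hdan : AnalyticOnNhd ℂ (deriv ψ) Set.univ := hψan.deriv
  have hdd : Differentiable ℂ (deriv ψ) := fun z => (hdan z (mem_univ z)).differentiableAt
  have hbdd : IsBounded (range (deriv ψ)) := by
    apply (isBounded_closedBall (x := (0:ℂ)) (r := 8)).subset
    rintro - ⟨z, rfl⟩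
    rw [mem_closedBall, dist_zero_right]
    exact hder z
  set a : ℂ := deriv ψ 0 with ha
  have hconst : ∀ z, deriv ψ z = a := fun z => hdd.apply_eq_apply_of_bounded hbdd z 0
  refine ⟨a, ψ 0, fun z => ?_⟩
  set θ : ℂ → ℂ := fun w => ψ w - a * w with hθ
  have hθd : Differentiable ℂ θ := hψ.sub (differentiable_id.const_mul a)
  have hθder : ∀ w, deriv θ w = 0 := by
    intro w
    have hmul : HasDerivAt (fun y : ℂ => a * y) a w := by
      simpa using (hasDerivAt_id w).const_mul a
    have hh : HasDerivAt θ (deriv ψ w - a) w := ((hψ w).hasDerivAt).sub hmul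
    rw [hh.deriv, hconst w, sub_self]
  have := is_const_of_deriv_eq_zero hθd hθder z 0
  have h0 : θ 0 = ψ 0 := by simp [hθ]
  have hz : θ z = ψ z - a * z := rfl
  rw [h0, hz] at this
  linear_combination this

lemma iteratedDeriv_exp_affine (a b : ℂ) (j : ℕ) :
    iteratedDeriv j (fun z => Complex.exp (a * z + b)) = fun z => a ^ j * Complex.exp (a * z + b) := by
  induction j with
  | zero => funext z; simp [iteratedDeriv_zero]
  | succ j ih =>
    rw [iteratedDeriv_succ, ih]
    funext w
    have h1 : HasDerivAt (fun z : ℂ => a * z + b) a w := by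
      simpa using ((hasDerivAt_id w).const_mul a).add_const b
    have h2 : HasDerivAt (fun z : ℂ => Complex.exp (a * z + b))
        (Complex.exp (a * w + b) * a) w := h1.cexp
    have h3 := h2.const_mul (a ^ j)
    rw [h3.deriv]
    ring

lemma exp_form {G : ℂ → ℂ} {k : ℕ} (hk : 1 ≤ k) (hGa : ∀ x, AnalyticAt ℂ G x)
    (hG0 : ∀ x, G x ≠ 0) (hode : iteratedDeriv k G = G) :
    ∃ a b : ℂ, a ^ k = 1 ∧ ∀ z, G z = Complex.exp (a * z + b) := by
  have hG : Differentiable ℂ G := fun x => (hGa x).differentiableAt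
  obtain ⟨M, hM1, hMb⟩ := growth_of_ode hk hG hode
  set φ : ℂ → ℂ := fun z => deriv G z / G z with hφdef
  have hGd : Differentiable ℂ (deriv G) := by
    have hOn : AnalyticOnNhd ℂ G Set.univ := fun x _ => hGa x
    exact fun z => (hOn.deriv z (mem_univ z)).differentiableAt
  have hφ : Differentiable ℂ φ := hGd.div hG hG0
  obtain ⟨Φ, hΦ0, hΦder⟩ := exists_primitive hφ
  set ψ : ℂ → ℂ := fun z => Φ z + Complex.log (G 0) with hψdef
  have hψder : ∀ z, HasDerivAt ψ (φ z) z := fun z => (hΦder z).add_const _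
  have hψ : Differentiable ℂ ψ := fun z => (hψder z).differentiableAt
  -- G = exp ∘ ψ
  have hexp : ∀ z, Complex.exp (ψ z) = G z := by
    set H : ℂ → ℂ := fun z => G z * Complex.exp (-ψ z) with hHdef
    have hHder : ∀ z, HasDerivAt H 0 z := by
      intro z
      have h1 : HasDerivAt (fun w => Complex.exp (-ψ w)) (Complex.exp (-ψ z) * (-(φ z))) z :=
        (hψder z).neg.cexp
      have h2 := ((hG z).hasDerivAt).mul h1
      refine h2.congr_deriv (Eq.symm ?_)
      rw [hφdef]
      field_simp [hG0 z]
      ring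
    have hHd : Differentiable ℂ H := fun z => (hHder z).differentiableAt
    have hHconst : ∀ z, H z = H 0 :=
      fun z => is_const_of_deriv_eq_zero hHd (fun w => (hHder w).deriv) z 0
    have hH0 : H 0 = 1 := by
      rw [hHdef]
      simp only [hψdef, hΦ0, zero_add]
      rw [Complex.exp_neg, Complex.exp_log (hG0 0)]
      field_simp [hG0 0]
    intro z
    have := (hHconst z).trans hH0
    rw [hHdef] at this
    simp only at this
    rw [Complex.exp_neg, mul_inv_eq_one₀ (Complex.exp_ne_zero _)] at this
    exact this.symm
  have hRe : ∀ z : ℂ, (ψ z).re ≤ Real.log M + ‖z‖ := by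
    intro z
    have h1 : Real.exp (ψ z).re = ‖G z‖ := by
      rw [← hexp z, Complex.norm_exp]
    have h2 : Real.exp (ψ z).re ≤ M * Real.exp ‖z‖ := by rw [h1]; exact hMb z
    have h3 : M * Real.exp ‖z‖ = Real.exp (Real.log M + ‖z‖) := by
      rw [Real.exp_add, Real.exp_log (by linarith : (0:ℝ) < M)]
    rw [h3] at h2
    exact Real.exp_le_exp.mp h2
  obtain ⟨a, b, hab⟩ := affine_of_re_linear_growth hψ hRe
  have hGform : ∀ z, G z = Complex.exp (a * z + b) := by
    intro z
    rw [← hexp z, hab z]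
  refine ⟨a, b, ?_, hGform⟩
  have hGeq : G = fun z => Complex.exp (a * z + b) := funext hGform
  rw [hGeq, iteratedDeriv_exp_affine a b k] at hode
  have := congrFun hode 0
  simp only [mul_zero, zero_add] at this
  have hexpb := Complex.exp_ne_zero b
  field_simp at this
  exact this

/- Order of a meromorphic function at a point, as an element of ℤ ∪ {∞}
(positive at zeros, negative at poles, ∞ if the function vanishes identically near the point).
The junk value 0 is never used in the statements below, where the functions involved are
meromorphic on all of ℂ. -/
open Classical in
noncomputable def mOrder (h : ℂ → ℂ) (z : ℂ) : WithTop ℤ :=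
  if hh : MeromorphicAt h z then meromorphicOrderAt h z else 0

/-- meromorphic version of Statement 10: if (f^m)^(k) agrees with f^m away
from a discrete set and m ≥ k+1, then f has neither zeros nor poles and
f(z) = c·exp(ζz/m) away from a discrete set, with c ≠ 0 and ζ^k = 1. -/
theorem stmt_11 (k m : ℕ) (hk : 1 ≤ k) (hm : k + 1 ≤ m)
    (f : ℂ → ℂ) (hf : MeromorphicOn f Set.univ)
    (hnc : ¬ ∃ c : ℂ, ∃ s : Set ℂ, DiscreteTopology s ∧ ∀ z ∉ s, f z = c)
    (heq : ∃ s : Set ℂ, DiscreteTopology s ∧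
      ∀ z ∉ s, iteratedDeriv k (fun u => f u ^ m) z = f z ^ m) :
    (∀ z : ℂ, mOrder f z = 0) ∧
      ∃ c : ℂ, c ≠ 0 ∧ ∃ ζ : ℂ, ζ ^ k = 1 ∧ ∃ s : Set ℂ, DiscreteTopology s ∧
        ∀ z ∉ s, f z = c * Complex.exp (ζ * z / (m : ℂ)) := by
  obtain ⟨s, hs, hsEq⟩ := heq
  have h0 : ∀ x : ℂ, (hf x (mem_univ x)).order = 0 :=
    order_zero_everywhere hk hm hf hnc hs hsEq
  have hmord : ∀ z : ℂ, mOrder f z = 0 := by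
    intro z
    rw [mOrder, dif_pos (hf z (mem_univ z))]
    exact h0 z
  refine ⟨hmord, ?_⟩
  obtain ⟨F, hFa, hF0, hFf⟩ := exists_entire_extension hf h0
  have hode := global_ode hs hsEq hFa hFf
  have hGa : ∀ x, AnalyticAt ℂ (fun z => F z ^ m) x := fun x => (hFa x).pow m
  have hG0 : ∀ x : ℂ, (fun z => F z ^ m) x ≠ 0 := fun x => pow_ne_zero m (hF0 x)
  obtain ⟨a, b, hak, hform⟩ := exp_form hk hGa hG0 hode
  -- discreteness of the exceptional set
  set D : Set ℂ := {z | f z ≠ F z} with hD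
  have havoid : ∀ x : ℂ, ∀ᶠ z in 𝓝[≠] x, z ∉ D := by
    intro x
    filter_upwards [hFf x] with z hz
    simp only [hD, mem_setOf_eq, not_not]
    exact hz.symm
  obtain ⟨hDc, hDdisc, hDdense⟩ := closed_discrete_of_punctured_avoid havoid
  -- extract the m-th root
  have hm0 : (m : ℂ) ≠ 0 := Nat.cast_ne_zero.mpr (by omega)
  set q : ℂ → ℂ := fun z => Complex.exp ((a * z + b) / m) with hq
  have hqm : ∀ z, q z ^ m = Complex.exp (a * z + b) := by
    intro z
    rw [hq, ← Complex.exp_nat_mul]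
    congr 1
    field_simp
  have hq0 : ∀ z, q z ≠ 0 := fun z => Complex.exp_ne_zero _
  have hqd : Differentiable ℂ q := by
    apply Complex.differentiable_exp.comp
    apply Differentiable.div_const
    exact (differentiable_id.const_mul a).add_const b
  set H : ℂ → ℂ := fun z => F z / q z with hH
  have hFd : Differentiable ℂ F := fun x => (hFa x).differentiableAt
  have hHd : Differentiable ℂ H := hFd.div hqd hq0
  have hHm : ∀ z, H z ^ m = 1 := by
    intro z
    rw [hH]
    simp only
    rw [div_pow, hqm, ← hform z]
    exact div_self (hG0 z)
  have hH0 : ∀ z, H z ≠ 0 := by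
    intro z h
    have := hHm z
    rw [h] at this
    simp [zero_pow (by omega : m ≠ 0)] at this
  have hHder0 : ∀ z, deriv H z = 0 := by
    intro z
    have h1 : HasDerivAt (fun w => H w ^ m) ((m : ℂ) * H z ^ (m - 1) * deriv H z) z :=
      ((hHd z).hasDerivAt).pow m
    have h2 : (fun w => H w ^ m) = fun _ => (1 : ℂ) := funext hHm
    rw [h2] at h1
    have h3 := h1.deriv
    rw [deriv_const] at h3
    have h4 : (m : ℂ) * H z ^ (m - 1) ≠ 0 :=
      mul_ne_zero hm0 (pow_ne_zero _ (hH0 z))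
    field_simp [h4] at h3
    exact (mul_eq_zero.mp h3.symm).resolve_left h4
  have hHconst : ∀ z, H z = H 0 := fun z => is_const_of_deriv_eq_zero hHd hHder0 z 0
  set w : ℂ := H 0 with hw
  have hw0 : w ≠ 0 := hH0 0
  have hFform : ∀ z, F z = w * q z := by
    intro z
    have h : F z / q z = w := hHconst z
    rw [div_eq_iff (hq0 z)] at h
    rw [h, mul_comm]
  refine ⟨w * Complex.exp (b / m), mul_ne_zero hw0 (Complex.exp_ne_zero _), a, hak, D, hDdisc, ?_⟩
  intro z hz
  have hfz : f z = F z := not_not.mp hz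
  rw [hfz, hFform z, hq]
  simp only
  rw [mul_assoc, ← Complex.exp_add]
  congr 2
  field_simp
  ring
end
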